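/- Let 0 ≤ k ≤ n. Let q, r be standard Young tableaux of shapes μ ⊢ k and λ ⊢ n with λ/μ a horizontal strip, and let s, t be standard Young tableaux of shapes μ' ⊢ k and λ' ⊢ n with λ'/μ' a horizontal strip. If (μ, λ) ≠ (μ', λ'), then ⟨f_{q,r}, f_{s,t}⟩ = 0, where ⟨f, g⟩ = Σ_{σ ∈ S_{k,n}} f(σ)·conj(g(σ)) is the standard inner product on ℂ[S_{k,n}]. -/

import Mathlib

open scoped Classical

/-- The sequence of parts of a partition of `m`, in weakly decreasing order, indexed from 0
(and equal to `0` beyond the last part): `partFun p i` is the `(i+1)`-st largest part. -/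
noncomputable def partFun {m : ℕ} (p : Nat.Partition m) (i : ℕ) : ℕ :=
  sSup {a | i < Multiset.card (p.parts.filter (fun x => a ≤ x))}

/-- `pos` encodes a standard Young tableau of shape `lam` (given by its row lengths) with `m`
cells, recording the cell `pos v = (row, column)` of each value `v ∈ {0, …, m-1}` (0-indexed
values): each value occupies a cell of the diagram, distinct values occupy distinct cells
(hence, the cells are in bijection with the values), and values strictly increase along each
row and down each column. -/
def IsSYTpos {m : ℕ} (lam : ℕ → ℕ) (pos : Fin m → ℕ × ℕ) : Prop :=
  (∀ v, (pos v).2 < lam (pos v).1) ∧ Function.Injective pos ∧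
  (∀ v w, (pos v).1 = (pos w).1 → (pos v).2 < (pos w).2 → v < w) ∧
  (∀ v w, (pos v).2 = (pos w).2 → (pos v).1 < (pos w).1 → v < w)

/-- `lam/mu` is a horizontal strip: `mu i ≤ lam i` for all rows `i`, and no column contains
two cells of `lam/mu` (equivalently `lam (i+1) ≤ mu i`). -/
def IsHorizStrip (mu lam : ℕ → ℕ) : Prop :=
  ∀ i, mu i ≤ lam i ∧ lam (i + 1) ≤ mu i

/-- The column stabilizer `C_u` of a Young tableau `u` encoded by its position function
`pos`: the permutations of the values preserving each column setwise. -/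
noncomputable def CStab {m : ℕ} (pos : Fin m → ℕ × ℕ) : Finset (Equiv.Perm (Fin m)) :=
  Finset.univ.filter fun π => ∀ v, (pos (π v)).2 = (pos v).2

/-- The pair of tabloids `({πs}, {π't})` covers the injection `σ`, where `s, t` are Young
tableaux with position functions `posS, posT` and `π, π'` relabel their values: the value
`i` occupies the cell `posS (π⁻¹ i)` of `πs`, so the condition
`row_{πs}(i) = row_{π't}(σ i)` reads `(posS (π⁻¹ i)).1 = (posT (π'⁻¹ (σ i))).1`. -/
def coversPerm {k n : ℕ} (posS : Fin k → ℕ × ℕ) (posT : Fin n → ℕ × ℕ)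
    (π : Equiv.Perm (Fin k)) (π' : Equiv.Perm (Fin n)) (σ : Fin k ↪ Fin n) : Prop :=
  ∀ i, (posS (π⁻¹ i)).1 = (posT (π'⁻¹ (σ i))).1

/-- The function `f_{s,t} : S_{k,n} → ℂ`,
`f_{s,t}(σ) = Σ_{π ∈ C_s} Σ_{π' ∈ C_t} sgn(π)·sgn(π')·1[({πs},{π't}) covers σ]`,
for Young tableaux `s, t` with position functions `posS, posT`. -/
noncomputable def fST {k n : ℕ} (posS : Fin k → ℕ × ℕ) (posT : Fin n → ℕ × ℕ)
    (σ : Fin k ↪ Fin n) : ℂ :=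
  ∑ π ∈ CStab posS, ∑ π' ∈ CStab posT,
    ((Equiv.Perm.sign π : ℤ) : ℂ) * ((Equiv.Perm.sign π' : ℤ) : ℂ) *
      (if coversPerm posS posT π π' σ then 1 else 0)

namespace Aux

variable {m : ℕ}

def Npart (p : Nat.Partition m) (a : ℕ) : ℕ :=
  Multiset.card (p.parts.filter (fun x => a ≤ x))

lemma Npart_anti (p : Nat.Partition m) {a b : ℕ} (hab : a ≤ b) : Npart p b ≤ Npart p a :=
  Multiset.card_le_card (Multiset.monotone_filter_right _ (fun x hx => le_trans hab hx))

lemma part_le (p : Nat.Partition m) {x : ℕ} (hx : x ∈ p.parts) : x ≤ m := by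
  conv_rhs => rw [← p.parts_sum]
  exact Multiset.single_le_sum (fun y _ => Nat.zero_le y) x hx

lemma le_of_Npart_pos (p : Nat.Partition m) {a : ℕ} (h : 0 < Npart p a) : a ≤ m := by
  obtain ⟨x, hx⟩ := Multiset.card_pos_iff_exists_mem.1 h
  rw [Multiset.mem_filter] at hx
  exact le_trans hx.2 (part_le p hx.1)

lemma partFun_eq : partFun = fun (p : Nat.Partition m) i => sSup {a | i < Npart p a} := rfl

lemma le_partFun_iff (p : Nat.Partition m) {i a : ℕ} (ha : 1 ≤ a) :
    a ≤ partFun p i ↔ i < Npart p a := by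
  have hbdd : BddAbove {a | i < Npart p a} := by
    refine ⟨m, fun x hx => ?_⟩
    exact le_of_Npart_pos p (lt_of_le_of_lt (Nat.zero_le i) hx)
  constructor
  · intro h
    have hne : {a | i < Npart p a}.Nonempty := by
      by_contra hemp
      rw [Set.not_nonempty_iff_eq_empty] at hemp
      rw [partFun_eq] at h
      simp only [hemp, csSup_empty, Nat.le_zero, Nat.bot_eq_zero] at h
      omega
    have hmem : sSup {a | i < Npart p a} ∈ {a | i < Npart p a} := Nat.sSup_mem hne hbdd
    have : i < Npart p (sSup {a | i < Npart p a}) := hmem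
    exact lt_of_lt_of_le this (Npart_anti p h)
  · intro h
    exact le_csSup hbdd h

lemma partFun_le (p : Nat.Partition m) (i : ℕ) : partFun p i ≤ m := by
  rcases Nat.eq_zero_or_pos (partFun p i) with h | h
  · omega
  · have h2 : i < Npart p (partFun p i) := ((le_partFun_iff p (a := partFun p i) h).1 le_rfl)
    exact le_of_Npart_pos p (by omega)

lemma partFun_anti (p : Nat.Partition m) {i j : ℕ} (hij : i ≤ j) : partFun p j ≤ partFun p i := by
  rcases Nat.eq_zero_or_pos (partFun p j) with h | h
  · omega
  · have h2 : j < Npart p (partFun p j) := ((le_partFun_iff p (a := partFun p j) h).1 le_rfl)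
    exact (le_partFun_iff p (a := partFun p j) h).2 (by omega)

lemma Npart_one (p : Nat.Partition m) : Npart p 1 = Multiset.card p.parts := by
  unfold Npart
  congr 1
  rw [Multiset.filter_eq_self]
  exact fun x hx => p.parts_pos hx

lemma card_parts_le (p : Nat.Partition m) : Multiset.card p.parts ≤ m := by
  have := Multiset.card_nsmul_le_sum (s := p.parts) (a := 1) (fun x hx => p.parts_pos hx)
  rw [p.parts_sum] at this
  simpa using this

lemma partFun_eq_zero (p : Nat.Partition m) {i : ℕ} (hi : Multiset.card p.parts ≤ i) :
    partFun p i = 0 := by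
  by_contra h
  have h2 : i < Npart p (partFun p i) := (le_partFun_iff p (a := partFun p i) (by omega)).1 le_rfl
  have h3 : Npart p (partFun p i) ≤ Npart p 1 := Npart_anti p (by omega)
  rw [Npart_one] at h3
  omega

lemma row_lt_of_partFun_pos (p : Nat.Partition m) {i : ℕ} (h : 0 < partFun p i) : i < m := by
  by_contra hc
  have := partFun_eq_zero p (i := i) (le_trans (card_parts_le p) (by omega))
  omega

end Aux

namespace Aux
open Finset

variable {m : ℕ}

lemma Npart_le_card (p : Nat.Partition m) (a : ℕ) : Npart p a ≤ Multiset.card p.parts :=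
  Multiset.card_le_card (Multiset.filter_le _ _)

lemma filter_range_eq (p : Nat.Partition m) {a K : ℕ} (ha : 1 ≤ a)
    (hK : Multiset.card p.parts ≤ K) :
    (Finset.range K).filter (fun i => a ≤ partFun p i) = Finset.range (Npart p a) := by
  ext i
  simp only [mem_filter, mem_range]
  constructor
  · rintro ⟨_, h2⟩; exact (le_partFun_iff p ha).1 h2
  · intro h
    exact ⟨lt_of_lt_of_le h (le_trans (Npart_le_card p a) hK), (le_partFun_iff p ha).2 h⟩

lemma sum_ind {M x : ℕ} (h : x ≤ M) :
    (∑ a ∈ Finset.range M, if a < x then 1 else 0) = x := by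
  rw [← Finset.card_filter]
  have : (Finset.range M).filter (fun a => a < x) = Finset.range x := by
    ext a
    simp only [Finset.mem_filter, Finset.mem_range]
    omega
  rw [this, Finset.card_range]

lemma sum_counts (s : Multiset ℕ) (M : ℕ) (hM : ∀ x ∈ s, x ≤ M) :
    ∑ a ∈ Finset.range M, Multiset.card (s.filter (fun x => a < x)) = s.sum := by
  induction s using Multiset.induction_on with
  | empty => simp
  | cons x t ih =>
    have hx : x ≤ M := hM x (Multiset.mem_cons_self x t)
    have ht : ∀ y ∈ t, y ≤ M := fun y hy => hM y (Multiset.mem_cons_of_mem hy)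
    simp only [Multiset.filter_cons, Multiset.card_add, Finset.sum_add_distrib, ih ht,
      Multiset.sum_cons]
    congr 1
    have : ∀ a : ℕ, Multiset.card (if a < x then ({x} : Multiset ℕ) else 0)
        = if a < x then 1 else 0 := by
      intro a; split <;> simp
    rw [Finset.sum_congr rfl (fun a _ => this a), sum_ind hx]

lemma sum_partFun (p : Nat.Partition m) {K : ℕ} (hK : Multiset.card p.parts ≤ K) :
    ∑ i ∈ Finset.range K, partFun p i = m := by
  have h1 : ∀ i, partFun p i = ∑ a ∈ Finset.range m, if a < partFun p i then 1 else 0 := by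
    intro i
    rw [sum_ind (partFun_le p i)]
  calc ∑ i ∈ Finset.range K, partFun p i
      = ∑ i ∈ Finset.range K, ∑ a ∈ Finset.range m, (if a < partFun p i then 1 else 0) :=
        Finset.sum_congr rfl (fun i _ => h1 i)
    _ = ∑ a ∈ Finset.range m, ∑ i ∈ Finset.range K, (if a < partFun p i then 1 else 0) :=
        Finset.sum_comm
    _ = ∑ a ∈ Finset.range m, Npart p (a + 1) := by
        refine Finset.sum_congr rfl (fun a _ => ?_)
        rw [← Finset.card_filter]
        have : (Finset.range K).filter (fun i => a < partFun p i)
            = (Finset.range K).filter (fun i => a + 1 ≤ partFun p i) := by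
          apply Finset.filter_congr; intro i _; constructor <;> (intro; omega)
        rw [this, filter_range_eq p (by omega) hK, Finset.card_range]
    _ = m := by
        conv_rhs => rw [← p.parts_sum]
        rw [← sum_counts p.parts m (fun x hx => part_le p hx)]
        refine Finset.sum_congr rfl (fun a _ => ?_)
        unfold Npart
        exact congrArg Multiset.card (Multiset.filter_congr (fun x _ => by omega))

end Aux

namespace Aux
open Finset

variable {m : ℕ}

lemma Npart_succ_add_count (p : Nat.Partition m) {a : ℕ} (ha : 1 ≤ a) :
    Npart p (a + 1) + p.parts.count a = Npart p a := by
  rw [Multiset.count_eq_card_filter_eq]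
  unfold Npart
  rw [← Multiset.card_add, Multiset.filter_add_filter]
  have h1 : Multiset.filter (fun x => a + 1 ≤ x ∨ a = x) p.parts
      = Multiset.filter (fun x => a ≤ x) p.parts :=
    Multiset.filter_congr (fun x _ => by omega)
  have h2 : Multiset.filter (fun x => a + 1 ≤ x ∧ a = x) p.parts = 0 := by
    rw [Multiset.filter_eq_nil]
    intro x _ hx; omega
  rw [h1, h2, Multiset.card_add]
  simp

lemma partition_eq_of_partFun_eq (p p' : Nat.Partition m)
    (h : ∀ i, partFun p i = partFun p' i) : p = p' := by
  have hN : ∀ a, 1 ≤ a → Npart p a = Npart p' a := by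
    intro a ha
    have e1 := filter_range_eq p ha (le_refl _)
    have hc : Multiset.card p.parts ≤ Multiset.card p.parts + Multiset.card p'.parts := by omega
    have hc' : Multiset.card p'.parts ≤ Multiset.card p.parts + Multiset.card p'.parts := by omega
    have e1 := filter_range_eq p ha hc
    have e2 := filter_range_eq p' ha hc'
    have : (Finset.range (Multiset.card p.parts + Multiset.card p'.parts)).filter
        (fun i => a ≤ partFun p i) = (Finset.range (Multiset.card p.parts +
          Multiset.card p'.parts)).filter (fun i => a ≤ partFun p' i) := by
      apply Finset.filter_congr
      intro i _
      rw [h i]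
    rw [this, e2] at e1
    have := congrArg Finset.card e1
    simpa using this.symm
  apply Nat.Partition.ext
  ext a
  rcases Nat.eq_zero_or_pos a with rfl | ha
  · rw [Multiset.count_eq_zero_of_notMem, Multiset.count_eq_zero_of_notMem]
    · intro hmem; exact absurd (p'.parts_pos hmem) (by omega)
    · intro hmem; exact absurd (p.parts_pos hmem) (by omega)
  · have e1 := Npart_succ_add_count p (a := a) ha
    have e2 := Npart_succ_add_count p' (a := a) ha
    rw [hN a ha, hN (a + 1) (by omega)] at e1
    omega

lemma partition_eq_of_psum (p p' : Nat.Partition m)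
    (h1 : ∀ i, (∑ j ∈ Finset.range i, partFun p j) ≤ ∑ j ∈ Finset.range i, partFun p' j)
    (h2 : ∀ i, (∑ j ∈ Finset.range i, partFun p' j) ≤ ∑ j ∈ Finset.range i, partFun p j) :
    p = p' := by
  apply partition_eq_of_partFun_eq
  intro i
  have e1 : ∀ j, (∑ x ∈ Finset.range j, partFun p x) = ∑ x ∈ Finset.range j, partFun p' x :=
    fun j => le_antisymm (h1 j) (h2 j)
  have s1 := Finset.sum_range_succ (partFun p) i
  have s2 := Finset.sum_range_succ (partFun p') i
  have := e1 (i + 1)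
  rw [s1, s2, e1 i] at this
  omega

end Aux

namespace Aux
open Finset

variable {m : ℕ}

lemma col_mem_iff (p : Nat.Partition m) {c i : ℕ} :
    c < partFun p i ↔ i < Npart p (c + 1) := by
  rw [← le_partFun_iff p (a := c + 1) (by omega)]
  omega

lemma psum_eq_sum_min (p : Nat.Partition m) (i : ℕ) :
    ∑ j ∈ Finset.range i, partFun p j = ∑ c ∈ Finset.range m, min i (Npart p (c + 1)) := by
  have h1 : ∀ j, partFun p j = ∑ c ∈ Finset.range m, if c < partFun p j then 1 else 0 :=
    fun j => (sum_ind (partFun_le p j)).symm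
  calc ∑ j ∈ Finset.range i, partFun p j
      = ∑ j ∈ Finset.range i, ∑ c ∈ Finset.range m, (if c < partFun p j then 1 else 0) :=
        Finset.sum_congr rfl (fun j _ => h1 j)
    _ = ∑ c ∈ Finset.range m, ∑ j ∈ Finset.range i, (if c < partFun p j then 1 else 0) :=
        Finset.sum_comm
    _ = ∑ c ∈ Finset.range m, min i (Npart p (c + 1)) := by
        refine Finset.sum_congr rfl (fun c _ => ?_)
        rw [← Finset.card_filter]
        have : (Finset.range i).filter (fun j => c < partFun p j)
            = Finset.range (min i (Npart p (c + 1))) := by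
          ext j
          simp only [Finset.mem_filter, Finset.mem_range, lt_min_iff]
          rw [col_mem_iff p]
        rw [this, Finset.card_range]

/-- The diagram of `p` as a finset. -/
noncomputable def diag (p : Nat.Partition m) : Finset (ℕ × ℕ) :=
  (Finset.range m).biUnion (fun i => (Finset.range (partFun p i)).image (fun c => (i, c)))

lemma mem_diag (p : Nat.Partition m) {x : ℕ × ℕ} : x ∈ diag p ↔ x.2 < partFun p x.1 := by
  unfold diag
  simp only [Finset.mem_biUnion, Finset.mem_image, Finset.mem_range]
  constructor
  · rintro ⟨i, _, c, hc, rfl⟩; exact hc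
  · intro hx
    exact ⟨x.1, row_lt_of_partFun_pos p (by omega), x.2, hx, rfl⟩

lemma card_diag (p : Nat.Partition m) : (diag p).card = m := by
  unfold diag
  rw [Finset.card_biUnion]
  · have : ∀ i ∈ Finset.range m,
        ((Finset.range (partFun p i)).image (fun c => (i, c))).card = partFun p i := by
      intro i _
      rw [Finset.card_image_of_injective _ (fun a b hab => by simpa using hab),
        Finset.card_range]
    rw [Finset.sum_congr rfl this, sum_partFun p (le_trans (card_parts_le p) le_rfl)]
  · intro i _ j _ hij
    simp only [Finset.disjoint_left, Finset.mem_image, Finset.mem_range]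
    rintro a ⟨c, _, rfl⟩ ⟨c', _, h⟩
    exact hij ((Prod.ext_iff.1 h).1.symm)

lemma syt_image (p : Nat.Partition m) (pos : Fin m → ℕ × ℕ)
    (hdiag : ∀ v, (pos v).2 < partFun p (pos v).1) (hinj : Function.Injective pos) :
    Finset.univ.image pos = diag p := by
  apply Finset.eq_of_subset_of_card_le
  · intro x hx
    simp only [Finset.mem_image] at hx
    obtain ⟨v, _, rfl⟩ := hx
    exact (mem_diag p).2 (hdiag v)
  · rw [card_diag, Finset.card_image_of_injective _ hinj, Finset.card_univ, Fintype.card_fin]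

lemma syt_row_count (p : Nat.Partition m) (pos : Fin m → ℕ × ℕ)
    (hdiag : ∀ v, (pos v).2 < partFun p (pos v).1) (hinj : Function.Injective pos) (j : ℕ) :
    (Finset.univ.filter fun v => (pos v).1 = j).card = partFun p j := by
  have himg : (Finset.univ.filter fun v => (pos v).1 = j).image pos
      = (diag p).filter (fun x => x.1 = j) := by
    rw [← syt_image p pos hdiag hinj, Finset.filter_image]
  have hcard : (Finset.univ.filter fun v => (pos v).1 = j).card
      = ((diag p).filter (fun x => x.1 = j)).card := by
    rw [← himg, Finset.card_image_of_injective _ hinj]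
  rw [hcard]
  have : (diag p).filter (fun x => x.1 = j)
      = (Finset.range (partFun p j)).image (fun c => (j, c)) := by
    ext x
    simp only [Finset.mem_filter, mem_diag, Finset.mem_image, Finset.mem_range]
    constructor
    · rintro ⟨h1, rfl⟩
      exact ⟨x.2, h1, rfl⟩
    · rintro ⟨c, hc, rfl⟩
      exact ⟨hc, rfl⟩
  rw [this, Finset.card_image_of_injective _ (fun a b hab => by simpa using hab),
    Finset.card_range]

/-- The key dominance counting lemma. -/
lemma dominance (p p' : Nat.Partition m) (rowF : Fin m → ℕ)
    (hrow : ∀ j, (Finset.univ.filter fun v => rowF v = j).card = partFun p j)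
    (posC : Fin m → ℕ × ℕ) (hinj : Function.Injective posC)
    (hdiag : ∀ v, (posC v).2 < partFun p' (posC v).1)
    (hgood : ∀ v w, v ≠ w → rowF v = rowF w → (posC v).2 ≠ (posC w).2)
    (i : ℕ) : (∑ j ∈ Finset.range i, partFun p j) ≤ ∑ j ∈ Finset.range i, partFun p' j := by
  set S := Finset.univ.filter (fun v : Fin m => rowF v < i) with hS
  have hmemS : ∀ v, v ∈ S ↔ rowF v < i := by
    intro v
    simp [hS]
  have hmemSf : ∀ (c : ℕ) v, v ∈ S.filter (fun v => (posC v).2 = c)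
      ↔ rowF v < i ∧ (posC v).2 = c := by
    intro c v
    rw [Finset.mem_filter, hmemS]
  have hcardS : S.card = ∑ j ∈ Finset.range i, partFun p j := by
    have : S = (Finset.range i).biUnion (fun j => Finset.univ.filter fun v => rowF v = j) := by
      ext v
      rw [hmemS]
      simp only [Finset.mem_biUnion, Finset.mem_range, Finset.mem_filter, Finset.mem_univ,
        true_and]
      constructor
      · intro h; exact ⟨rowF v, h, rfl⟩
      · rintro ⟨j, hj, rfl⟩; exact hj
    rw [this, Finset.card_biUnion]
    · exact Finset.sum_congr rfl (fun j _ => hrow j)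
    · intro a _ b _ hab
      simp only [Finset.disjoint_left, Finset.mem_filter, Finset.mem_univ, true_and]
      intro v h1 h2
      exact hab (h1.symm.trans h2)
  have hsplit : S.card = ∑ c ∈ Finset.range m, (S.filter fun v => (posC v).2 = c).card := by
    have : S = (Finset.range m).biUnion (fun c => S.filter fun v => (posC v).2 = c) := by
      ext v
      simp only [Finset.mem_biUnion, Finset.mem_filter, Finset.mem_range]
      constructor
      · intro h
        exact ⟨(posC v).2, lt_of_lt_of_le (hdiag v) (partFun_le p' _), h, rfl⟩
      · rintro ⟨c, _, h, _⟩; exact h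
    conv_lhs => rw [this]
    rw [Finset.card_biUnion]
    intro a _ b _ hab
    simp only [Finset.disjoint_left, Finset.mem_filter]
    rintro v ⟨_, h1⟩ ⟨_, h2⟩
    exact hab (h1.symm.trans h2)
  have hbound : ∀ c, (S.filter fun v => (posC v).2 = c).card ≤ min i (Npart p' (c + 1)) := by
    intro c
    rw [le_min_iff]
    constructor
    · have : (S.filter fun v => (posC v).2 = c).card ≤ (Finset.range i).card := by
        apply Finset.card_le_card_of_injOn rowF
        · intro v hv
          replace hv : rowF v < i ∧ (posC v).2 = c := by
            rw [← hmemSf c v]; simpa using hv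
          simpa using hv.1
        · intro v hv w hw hvw
          replace hv : rowF v < i ∧ (posC v).2 = c := by
            rw [← hmemSf c v]; simpa using hv
          replace hw : rowF w < i ∧ (posC w).2 = c := by
            rw [← hmemSf c w]; simpa using hw
          by_contra hne
          exact hgood v w hne hvw (hv.2.trans hw.2.symm)
      simpa using this
    · have : (S.filter fun v => (posC v).2 = c).card
          ≤ (Finset.range (Npart p' (c + 1))).card := by
        apply Finset.card_le_card_of_injOn (fun v => (posC v).1)
        · intro v hv
          replace hv : rowF v < i ∧ (posC v).2 = c := by
            rw [← hmemSf c v]; simpa using hv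
          have h2 : (posC v).1 < Npart p' (c + 1) := by
            rw [← col_mem_iff p']
            have := hdiag v
            omega
          simpa using h2
        · intro v hv w hw hvw
          replace hv : rowF v < i ∧ (posC v).2 = c := by
            rw [← hmemSf c v]; simpa using hv
          replace hw : rowF w < i ∧ (posC w).2 = c := by
            rw [← hmemSf c w]; simpa using hw
          apply hinj
          exact Prod.ext hvw (hv.2.trans hw.2.symm)
      simpa using this
  calc ∑ j ∈ Finset.range i, partFun p j = S.card := hcardS.symm
    _ = ∑ c ∈ Finset.range m, (S.filter fun v => (posC v).2 = c).card := hsplit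
    _ ≤ ∑ c ∈ Finset.range m, min i (Npart p' (c + 1)) :=
        Finset.sum_le_sum (fun c _ => hbound c)
    _ = ∑ j ∈ Finset.range i, partFun p' j := (psum_eq_sum_min p' i).symm

end Aux


namespace Aux
open Equiv Finset

variable {k n : ℕ}

lemma mem_CStab {m : ℕ} {pos : Fin m → ℕ × ℕ} {π : Equiv.Perm (Fin m)} :
    π ∈ CStab pos ↔ ∀ v, (pos (π v)).2 = (pos v).2 := by
  unfold CStab
  simp

def PairEx {m : ℕ} (R C : Fin m → ℕ) : Prop :=
  ∃ ab : Fin m × Fin m, ab.1 ≠ ab.2 ∧ R ab.1 = R ab.2 ∧ C ab.1 = C ab.2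

noncomputable def Tsum (q : Fin k → ℕ × ℕ) (r : Fin n → ℕ × ℕ) (s : Fin k → ℕ × ℕ)
    (t : Fin n → ℕ × ℕ) : ℂ :=
  ∑ σ : Fin k ↪ Fin n, ∑ π1 ∈ CStab q, ∑ π2 ∈ CStab s, ∑ π1' ∈ CStab r, ∑ π2' ∈ CStab t,
    ((Equiv.Perm.sign π1 : ℤ) : ℂ) * ((Equiv.Perm.sign π2 : ℤ) : ℂ) *
    ((Equiv.Perm.sign π1' : ℤ) : ℂ) * ((Equiv.Perm.sign π2' : ℤ) : ℂ) *
      (if coversPerm q r π1 π1' σ ∧ coversPerm s t π2 π2' σ then 1 else 0)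

lemma lhs_eq (q : Fin k → ℕ × ℕ) (r : Fin n → ℕ × ℕ) (s : Fin k → ℕ × ℕ)
    (t : Fin n → ℕ × ℕ) :
    ∑ σ : Fin k ↪ Fin n, fST q r σ * (starRingEnd ℂ) (fST s t σ) = Tsum q r s t := by
  refine Finset.sum_congr rfl (fun σ _ => ?_)
  unfold fST
  simp only [map_sum, map_mul, map_intCast, apply_ite (starRingEnd ℂ), map_one, map_zero]
  rw [Finset.sum_mul_sum]
  refine Finset.sum_congr rfl (fun π1 _ => ?_)
  refine Finset.sum_congr rfl (fun π2 _ => ?_)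
  rw [Finset.sum_mul_sum]
  refine Finset.sum_congr rfl (fun π1' _ => ?_)
  refine Finset.sum_congr rfl (fun π2' _ => ?_)
  by_cases h1 : coversPerm q r π1 π1' σ <;> by_cases h2 : coversPerm s t π2 π2' σ <;>
    simp [h1, h2] <;> ring

lemma Tsum_comm (q : Fin k → ℕ × ℕ) (r : Fin n → ℕ × ℕ) (s : Fin k → ℕ × ℕ)
    (t : Fin n → ℕ × ℕ) : Tsum q r s t = Tsum s t q r := by
  unfold Tsum
  refine Finset.sum_congr rfl (fun σ _ => ?_)
  rw [Finset.sum_comm]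
  refine Finset.sum_congr rfl (fun π2 _ => ?_)
  refine Finset.sum_congr rfl (fun π1 _ => ?_)
  rw [Finset.sum_comm]
  refine Finset.sum_congr rfl (fun π2' _ => ?_)
  refine Finset.sum_congr rfl (fun π1' _ => ?_)
  by_cases h1 : coversPerm q r π1 π1' σ <;> by_cases h2 : coversPerm s t π2 π2' σ <;>
    simp [h1, h2] <;> ring

section Swap

variable {m : ℕ} {u : Fin m → ℕ × ℕ} {π : Equiv.Perm (Fin m)} {a b : Fin m}

lemma colswap_inv_apply (i : Fin m) :
    (π * Equiv.swap (π⁻¹ a) (π⁻¹ b))⁻¹ i = π⁻¹ (Equiv.swap a b i) := by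
  rw [mul_inv_rev, Equiv.Perm.mul_apply, Equiv.swap_inv]
  rcases eq_or_ne i a with rfl | hia
  · rw [Equiv.swap_apply_left, Equiv.swap_apply_left]
  rcases eq_or_ne i b with rfl | hib
  · rw [Equiv.swap_apply_right, Equiv.swap_apply_right]
  · rw [Equiv.swap_apply_of_ne_of_ne (fun h => hia (π⁻¹.injective h))
      (fun h => hib (π⁻¹.injective h)), Equiv.swap_apply_of_ne_of_ne hia hib]

lemma colswap_mem (hu : π ∈ CStab u) (hC : (u (π⁻¹ a)).2 = (u (π⁻¹ b)).2) :
    π * Equiv.swap (π⁻¹ a) (π⁻¹ b) ∈ CStab u := by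
  rw [mem_CStab] at hu ⊢
  intro v
  rw [Equiv.Perm.mul_apply]
  rcases eq_or_ne v (π⁻¹ a) with rfl | hva
  · rw [Equiv.swap_apply_left]
    have h1 := hu (π⁻¹ b)
    rw [(show ∀ x, π (π⁻¹ x) = x from fun x => by simp)] at h1
    rw [(show ∀ x, π (π⁻¹ x) = x from fun x => by simp), h1, ← hC]
  rcases eq_or_ne v (π⁻¹ b) with rfl | hvb
  · rw [Equiv.swap_apply_right]
    have h1 := hu (π⁻¹ a)
    rw [(show ∀ x, π (π⁻¹ x) = x from fun x => by simp)] at h1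
    rw [(show ∀ x, π (π⁻¹ x) = x from fun x => by simp), h1, hC]
  · rw [Equiv.swap_apply_of_ne_of_ne hva hvb]
    exact hu v

lemma colswap_sign (hab : a ≠ b) :
    Equiv.Perm.sign (π * Equiv.swap (π⁻¹ a) (π⁻¹ b)) = -Equiv.Perm.sign π := by
  rw [Equiv.Perm.sign_mul, Equiv.Perm.sign_swap (fun h => hab (by
    have := congrArg π h
    simpa using this)), mul_neg, mul_one]

lemma colswap_colfun (hC : (u (π⁻¹ a)).2 = (u (π⁻¹ b)).2) :
    (fun i => (u ((π * Equiv.swap (π⁻¹ a) (π⁻¹ b))⁻¹ i)).2) = fun i => (u (π⁻¹ i)).2 := by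
  funext i
  rw [colswap_inv_apply]
  rcases eq_or_ne i a with rfl | hia
  · rw [Equiv.swap_apply_left, ← hC]
  rcases eq_or_ne i b with rfl | hib
  · rw [Equiv.swap_apply_right, hC]
  · rw [Equiv.swap_apply_of_ne_of_ne hia hib]

lemma rowswap (hR : (u (π⁻¹ a)).1 = (u (π⁻¹ b)).1) (i : Fin m) :
    (u (π⁻¹ (Equiv.swap a b i))).1 = (u (π⁻¹ i)).1 := by
  rcases eq_or_ne i a with rfl | hia
  · rw [Equiv.swap_apply_left, ← hR]
  rcases eq_or_ne i b with rfl | hib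
  · rw [Equiv.swap_apply_right, hR]
  · rw [Equiv.swap_apply_of_ne_of_ne hia hib]

lemma colswap_fst (hab : a ≠ b) :
    (π * Equiv.swap (π⁻¹ a) (π⁻¹ b))⁻¹ a = π⁻¹ b := by
  rw [colswap_inv_apply, Equiv.swap_apply_left]

lemma colswap_snd (hab : a ≠ b) :
    (π * Equiv.swap (π⁻¹ a) (π⁻¹ b))⁻¹ b = π⁻¹ a := by
  rw [colswap_inv_apply, Equiv.swap_apply_right]

end Swap

end Aux

namespace Aux
open Equiv Finset

variable {k n : ℕ}

noncomputable def trm (q : Fin k → ℕ × ℕ) (r : Fin n → ℕ × ℕ) (s : Fin k → ℕ × ℕ)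
    (t : Fin n → ℕ × ℕ)
    (x : (Fin k ↪ Fin n) × Equiv.Perm (Fin k) × Equiv.Perm (Fin k) × Equiv.Perm (Fin n) ×
      Equiv.Perm (Fin n)) : ℂ :=
  ((Equiv.Perm.sign x.2.1 : ℤ) : ℂ) * ((Equiv.Perm.sign x.2.2.1 : ℤ) : ℂ) *
  ((Equiv.Perm.sign x.2.2.2.1 : ℤ) : ℂ) * ((Equiv.Perm.sign x.2.2.2.2 : ℤ) : ℂ) *
    (if coversPerm q r x.2.1 x.2.2.2.1 x.1 ∧ coversPerm s t x.2.2.1 x.2.2.2.2 x.1 then 1 else 0)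

noncomputable def Fset (q : Fin k → ℕ × ℕ) (r : Fin n → ℕ × ℕ) (s : Fin k → ℕ × ℕ)
    (t : Fin n → ℕ × ℕ) :
    Finset ((Fin k ↪ Fin n) × Equiv.Perm (Fin k) × Equiv.Perm (Fin k) × Equiv.Perm (Fin n) ×
      Equiv.Perm (Fin n)) :=
  Finset.univ ×ˢ (CStab q ×ˢ (CStab s ×ˢ (CStab r ×ˢ CStab t)))

lemma big_eq_Tsum (q : Fin k → ℕ × ℕ) (r : Fin n → ℕ × ℕ) (s : Fin k → ℕ × ℕ)
    (t : Fin n → ℕ × ℕ) : ∑ x ∈ Fset q r s t, trm q r s t x = Tsum q r s t := by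
  unfold Fset Tsum
  rw [Finset.sum_product]
  refine Finset.sum_congr rfl (fun σ _ => ?_)
  rw [Finset.sum_product]
  refine Finset.sum_congr rfl (fun π1 _ => ?_)
  rw [Finset.sum_product]
  refine Finset.sum_congr rfl (fun π2 _ => ?_)
  rw [Finset.sum_product]
  refine Finset.sum_congr rfl (fun π1' _ => ?_)
  refine Finset.sum_congr rfl (fun π2' _ => ?_)
  rfl

lemma mem_Fset {q : Fin k → ℕ × ℕ} {r : Fin n → ℕ × ℕ} {s : Fin k → ℕ × ℕ}
    {t : Fin n → ℕ × ℕ} {x} : x ∈ Fset q r s t ↔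
      x.2.1 ∈ CStab q ∧ x.2.2.1 ∈ CStab s ∧ x.2.2.2.1 ∈ CStab r ∧ x.2.2.2.2 ∈ CStab t := by
  unfold Fset
  simp [Finset.mem_product]

lemma cov2_flipK (s : Fin k → ℕ × ℕ) (t : Fin n → ℕ × ℕ) (π2 : Equiv.Perm (Fin k))
    (π2' : Equiv.Perm (Fin n)) (σ : Fin k ↪ Fin n) (a b : Fin k) :
    coversPerm s t (π2 * Equiv.swap (π2⁻¹ a) (π2⁻¹ b)) π2'
      ((Equiv.swap a b).toEmbedding.trans σ) ↔ coversPerm s t π2 π2' σ := by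
  unfold coversPerm
  constructor
  · intro h i
    have h2 := h (Equiv.swap a b i)
    rwa [colswap_inv_apply, Function.Embedding.trans_apply, Equiv.coe_toEmbedding,
      Equiv.swap_apply_self] at h2
  · intro h i
    rw [colswap_inv_apply, Function.Embedding.trans_apply, Equiv.coe_toEmbedding]
    exact h (Equiv.swap a b i)

lemma cov1_flipK (q : Fin k → ℕ × ℕ) (r : Fin n → ℕ × ℕ) (π1 : Equiv.Perm (Fin k))
    (π1' : Equiv.Perm (Fin n)) (σ : Fin k ↪ Fin n) {a b : Fin k}
    (hR : (q (π1⁻¹ a)).1 = (q (π1⁻¹ b)).1) :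
    coversPerm q r π1 π1' ((Equiv.swap a b).toEmbedding.trans σ) ↔ coversPerm q r π1 π1' σ := by
  unfold coversPerm
  constructor
  · intro h i
    have h2 := h (Equiv.swap a b i)
    rwa [Function.Embedding.trans_apply, Equiv.coe_toEmbedding, Equiv.swap_apply_self,
      rowswap hR] at h2
  · intro h i
    rw [Function.Embedding.trans_apply, Equiv.coe_toEmbedding, ← rowswap (π := π1) hR i]
    exact h (Equiv.swap a b i)

lemma cov2_flipN (s : Fin k → ℕ × ℕ) (t : Fin n → ℕ × ℕ) (π2 : Equiv.Perm (Fin k))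
    (π2' : Equiv.Perm (Fin n)) (σ : Fin k ↪ Fin n) (a b : Fin n) :
    coversPerm s t π2 (π2' * Equiv.swap (π2'⁻¹ a) (π2'⁻¹ b))
      (σ.trans (Equiv.swap a b).toEmbedding) ↔ coversPerm s t π2 π2' σ := by
  unfold coversPerm
  apply forall_congr'
  intro i
  rw [Function.Embedding.trans_apply, Equiv.coe_toEmbedding, colswap_inv_apply,
    Equiv.swap_apply_self]

lemma cov1_flipN (q : Fin k → ℕ × ℕ) (r : Fin n → ℕ × ℕ) (π1 : Equiv.Perm (Fin k))
    (π1' : Equiv.Perm (Fin n)) (σ : Fin k ↪ Fin n) {a b : Fin n}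
    (hR : (r (π1'⁻¹ a)).1 = (r (π1'⁻¹ b)).1) :
    coversPerm q r π1 π1' (σ.trans (Equiv.swap a b).toEmbedding) ↔ coversPerm q r π1 π1' σ := by
  unfold coversPerm
  apply forall_congr'
  intro i
  rw [Function.Embedding.trans_apply, Equiv.coe_toEmbedding, rowswap hR]

lemma pairEx_choose_congr {m : ℕ} {R C C' : Fin m → ℕ} (hC : C = C') (h1 : PairEx R C)
    (h2 : PairEx R C') : h1.choose = h2.choose := by
  subst hC
  rfl

noncomputable def flipK (q s : Fin k → ℕ × ℕ)
    (x : (Fin k ↪ Fin n) × Equiv.Perm (Fin k) × Equiv.Perm (Fin k) × Equiv.Perm (Fin n) ×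
      Equiv.Perm (Fin n)) :
    (Fin k ↪ Fin n) × Equiv.Perm (Fin k) × Equiv.Perm (Fin k) × Equiv.Perm (Fin n) ×
      Equiv.Perm (Fin n) :=
  if h : PairEx (fun i => (q (x.2.1⁻¹ i)).1) (fun i => (s (x.2.2.1⁻¹ i)).2) then
    ((Equiv.swap h.choose.1 h.choose.2).toEmbedding.trans x.1, x.2.1,
      x.2.2.1 * Equiv.swap (x.2.2.1⁻¹ h.choose.1) (x.2.2.1⁻¹ h.choose.2), x.2.2.2.1, x.2.2.2.2)
  else x

lemma flipK_eq (q s : Fin k → ℕ × ℕ) (σ : Fin k ↪ Fin n) (π1 π2 : Equiv.Perm (Fin k))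
    (π1' π2' : Equiv.Perm (Fin n))
    (h : PairEx (fun i => (q (π1⁻¹ i)).1) (fun i => (s (π2⁻¹ i)).2)) :
    flipK q s (σ, π1, π2, π1', π2') =
      ((Equiv.swap h.choose.1 h.choose.2).toEmbedding.trans σ, π1,
        π2 * Equiv.swap (π2⁻¹ h.choose.1) (π2⁻¹ h.choose.2), π1', π2') := by
  unfold flipK
  rw [dif_pos h]

lemma Tsum_zero_K (q : Fin k → ℕ × ℕ) (r : Fin n → ℕ × ℕ) (s : Fin k → ℕ × ℕ)
    (t : Fin n → ℕ × ℕ)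
    (H : ∀ π1 π2 : Equiv.Perm (Fin k), π1 ∈ CStab q → π2 ∈ CStab s →
      PairEx (fun i => (q (π1⁻¹ i)).1) (fun i => (s (π2⁻¹ i)).2)) :
    Tsum q r s t = 0 := by
  rw [← big_eq_Tsum]
  refine Finset.sum_involution (fun x _ => flipK q s x) ?_ ?_ ?_ ?_
  · rintro ⟨σ, π1, π2, π1', π2'⟩ hx
    rw [mem_Fset] at hx
    obtain ⟨h1, h2, h3, h4⟩ := hx
    have h := H π1 π2 h1 h2
    obtain ⟨hab, hR, hC⟩ := h.choose_spec
    rw [flipK_eq q s σ π1 π2 π1' π2' h]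
    unfold trm
    dsimp only
    rw [colswap_sign hab, cov2_flipK s t π2 π2' σ h.choose.1 h.choose.2,
      cov1_flipK q r π1 π1' σ hR]
    simp only [Units.val_neg, Int.cast_neg]
    ring
  · rintro ⟨σ, π1, π2, π1', π2'⟩ hx hne
    rw [mem_Fset] at hx
    obtain ⟨h1, h2, h3, h4⟩ := hx
    have h := H π1 π2 h1 h2
    obtain ⟨hab, hR, hC⟩ := h.choose_spec
    rw [flipK_eq q s σ π1 π2 π1' π2' h]
    intro heq
    have h5 := congrArg (fun y => y.2.2.1) heq
    dsimp only at h5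
    have h6 : Equiv.swap (π2⁻¹ h.choose.1) (π2⁻¹ h.choose.2) = 1 := by
      have := mul_left_cancel (a := π2)
        (b := Equiv.swap (π2⁻¹ h.choose.1) (π2⁻¹ h.choose.2)) (c := 1) (by rw [mul_one]; exact h5)
      exact this
    have h7 : π2⁻¹ h.choose.1 ≠ π2⁻¹ h.choose.2 := fun hc => hab (π2⁻¹.injective hc)
    have h8 := DFunLike.congr_fun h6 (π2⁻¹ h.choose.1)
    simp only [Equiv.swap_apply_left, Equiv.Perm.coe_one, id_eq] at h8
    exact h7 h8.symm
  · rintro ⟨σ, π1, π2, π1', π2'⟩ hx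
    rw [mem_Fset] at hx
    obtain ⟨h1, h2, h3, h4⟩ := hx
    have h := H π1 π2 h1 h2
    obtain ⟨hab, hR, hC⟩ := h.choose_spec
    rw [flipK_eq q s σ π1 π2 π1' π2' h, mem_Fset]
    exact ⟨h1, colswap_mem h2 hC, h3, h4⟩
  · rintro ⟨σ, π1, π2, π1', π2'⟩ hx
    rw [mem_Fset] at hx
    obtain ⟨h1, h2, h3, h4⟩ := hx
    have h := H π1 π2 h1 h2
    obtain ⟨hab, hR, hC⟩ := h.choose_spec
    rw [flipK_eq q s σ π1 π2 π1' π2' h]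
    unfold flipK
    dsimp only
    have hP2 : PairEx (fun i => (q (π1⁻¹ i)).1)
        (fun i => (s ((π2 * Equiv.swap (π2⁻¹ h.choose.1) (π2⁻¹ h.choose.2))⁻¹ i)).2) := by
      rw [colswap_colfun hC]
      exact h
    rw [dif_pos hP2, pairEx_choose_congr (colswap_colfun hC) hP2 h]
    have e1 : (Equiv.swap h.choose.1 h.choose.2).toEmbedding.trans
        ((Equiv.swap h.choose.1 h.choose.2).toEmbedding.trans σ) = σ := by
      ext i
      simp [Equiv.swap_apply_self]
    have e3 : (π2 * Equiv.swap (π2⁻¹ h.choose.1) (π2⁻¹ h.choose.2)) *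
        Equiv.swap ((π2 * Equiv.swap (π2⁻¹ h.choose.1) (π2⁻¹ h.choose.2))⁻¹ h.choose.1)
          ((π2 * Equiv.swap (π2⁻¹ h.choose.1) (π2⁻¹ h.choose.2))⁻¹ h.choose.2) = π2 := by
      rw [colswap_fst hab, colswap_snd hab, Equiv.swap_comm, mul_assoc, Equiv.swap_mul_self,
        mul_one]
    refine Prod.ext ?_ (Prod.ext rfl (Prod.ext ?_ rfl))
    · exact e1
    · exact e3

end Aux

namespace Aux
open Equiv Finset

variable {k n : ℕ}

noncomputable def flipN (r : Fin n → ℕ × ℕ) (t : Fin n → ℕ × ℕ)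
    (x : (Fin k ↪ Fin n) × Equiv.Perm (Fin k) × Equiv.Perm (Fin k) × Equiv.Perm (Fin n) ×
      Equiv.Perm (Fin n)) :
    (Fin k ↪ Fin n) × Equiv.Perm (Fin k) × Equiv.Perm (Fin k) × Equiv.Perm (Fin n) ×
      Equiv.Perm (Fin n) :=
  if h : PairEx (fun i => (r (x.2.2.2.1⁻¹ i)).1) (fun i => (t (x.2.2.2.2⁻¹ i)).2) then
    (x.1.trans (Equiv.swap h.choose.1 h.choose.2).toEmbedding, x.2.1, x.2.2.1, x.2.2.2.1,
      x.2.2.2.2 * Equiv.swap (x.2.2.2.2⁻¹ h.choose.1) (x.2.2.2.2⁻¹ h.choose.2))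
  else x

lemma flipN_eq (r t : Fin n → ℕ × ℕ) (σ : Fin k ↪ Fin n) (π1 π2 : Equiv.Perm (Fin k))
    (π1' π2' : Equiv.Perm (Fin n))
    (h : PairEx (fun i => (r (π1'⁻¹ i)).1) (fun i => (t (π2'⁻¹ i)).2)) :
    flipN r t (σ, π1, π2, π1', π2') =
      (σ.trans (Equiv.swap h.choose.1 h.choose.2).toEmbedding, π1, π2, π1',
        π2' * Equiv.swap (π2'⁻¹ h.choose.1) (π2'⁻¹ h.choose.2)) := by
  unfold flipN
  rw [dif_pos h]

lemma Tsum_zero_N (q : Fin k → ℕ × ℕ) (r : Fin n → ℕ × ℕ) (s : Fin k → ℕ × ℕ)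
    (t : Fin n → ℕ × ℕ)
    (H : ∀ π1' π2' : Equiv.Perm (Fin n), π1' ∈ CStab r → π2' ∈ CStab t →
      PairEx (fun i => (r (π1'⁻¹ i)).1) (fun i => (t (π2'⁻¹ i)).2)) :
    Tsum q r s t = 0 := by
  rw [← big_eq_Tsum]
  refine Finset.sum_involution (fun x _ => flipN r t x) ?_ ?_ ?_ ?_
  · rintro ⟨σ, π1, π2, π1', π2'⟩ hx
    rw [mem_Fset] at hx
    obtain ⟨h1, h2, h3, h4⟩ := hx
    have h := H π1' π2' h3 h4
    obtain ⟨hab, hR, hC⟩ := h.choose_spec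
    rw [flipN_eq r t σ π1 π2 π1' π2' h]
    unfold trm
    dsimp only
    rw [colswap_sign hab, cov2_flipN s t π2 π2' σ h.choose.1 h.choose.2,
      cov1_flipN q r π1 π1' σ hR]
    simp only [Units.val_neg, Int.cast_neg]
    ring
  · rintro ⟨σ, π1, π2, π1', π2'⟩ hx hne
    rw [mem_Fset] at hx
    obtain ⟨h1, h2, h3, h4⟩ := hx
    have h := H π1' π2' h3 h4
    obtain ⟨hab, hR, hC⟩ := h.choose_spec
    rw [flipN_eq r t σ π1 π2 π1' π2' h]
    intro heq
    have h5 := congrArg (fun y => y.2.2.2.2) heq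
    dsimp only at h5
    have h6 : Equiv.swap (π2'⁻¹ h.choose.1) (π2'⁻¹ h.choose.2) = 1 :=
      mul_left_cancel (a := π2') (by rw [mul_one]; exact h5)
    have h7 : π2'⁻¹ h.choose.1 ≠ π2'⁻¹ h.choose.2 := fun hc => hab (π2'⁻¹.injective hc)
    have h8 := DFunLike.congr_fun h6 (π2'⁻¹ h.choose.1)
    simp only [Equiv.swap_apply_left, Equiv.Perm.coe_one, id_eq] at h8
    exact h7 h8.symm
  · rintro ⟨σ, π1, π2, π1', π2'⟩ hx
    rw [mem_Fset] at hx
    obtain ⟨h1, h2, h3, h4⟩ := hx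
    have h := H π1' π2' h3 h4
    obtain ⟨hab, hR, hC⟩ := h.choose_spec
    rw [flipN_eq r t σ π1 π2 π1' π2' h, mem_Fset]
    exact ⟨h1, h2, h3, colswap_mem h4 hC⟩
  · rintro ⟨σ, π1, π2, π1', π2'⟩ hx
    rw [mem_Fset] at hx
    obtain ⟨h1, h2, h3, h4⟩ := hx
    have h := H π1' π2' h3 h4
    obtain ⟨hab, hR, hC⟩ := h.choose_spec
    rw [flipN_eq r t σ π1 π2 π1' π2' h]
    unfold flipN
    dsimp only
    have hP2 : PairEx (fun i => (r (π1'⁻¹ i)).1)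
        (fun i => (t ((π2' * Equiv.swap (π2'⁻¹ h.choose.1) (π2'⁻¹ h.choose.2))⁻¹ i)).2) := by
      rw [colswap_colfun hC]
      exact h
    rw [dif_pos hP2, pairEx_choose_congr (colswap_colfun hC) hP2 h]
    have e1 : (σ.trans (Equiv.swap h.choose.1 h.choose.2).toEmbedding).trans
        (Equiv.swap h.choose.1 h.choose.2).toEmbedding = σ := by
      ext i
      simp [Equiv.swap_apply_self]
    have e5 : (π2' * Equiv.swap (π2'⁻¹ h.choose.1) (π2'⁻¹ h.choose.2)) *
        Equiv.swap ((π2' * Equiv.swap (π2'⁻¹ h.choose.1) (π2'⁻¹ h.choose.2))⁻¹ h.choose.1)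
          ((π2' * Equiv.swap (π2'⁻¹ h.choose.1) (π2'⁻¹ h.choose.2))⁻¹ h.choose.2) = π2' := by
      rw [colswap_fst hab, colswap_snd hab, Equiv.swap_comm, mul_assoc, Equiv.swap_mul_self,
        mul_one]
    refine Prod.ext ?_ (Prod.ext rfl (Prod.ext rfl (Prod.ext rfl ?_)))
    · exact e1
    · exact e5

end Aux

namespace Aux
open Equiv Finset

lemma pairEx_of_not_dom {m : ℕ} (p p' : Nat.Partition m) (u w : Fin m → ℕ × ℕ)
    (hu : IsSYTpos (partFun p) u) (hw : IsSYTpos (partFun p') w)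
    (hnd : ¬ ∀ i, (∑ j ∈ Finset.range i, partFun p j) ≤ ∑ j ∈ Finset.range i, partFun p' j)
    (π1 π2 : Equiv.Perm (Fin m)) :
    PairEx (fun i => (u (π1⁻¹ i)).1) (fun i => (w (π2⁻¹ i)).2) := by
  by_contra hP
  apply hnd
  intro i
  have hgood : ∀ v v', v ≠ v' → (u (π1⁻¹ v)).1 = (u (π1⁻¹ v')).1 →
      (w (π2⁻¹ v)).2 ≠ (w (π2⁻¹ v')).2 := by
    intro v v' h1 h2 h3
    exact hP ⟨(v, v'), h1, h2, h3⟩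
  refine dominance p p' (fun i => (u (π1⁻¹ i)).1) ?_ (fun v => w (π2⁻¹ v)) ?_ ?_ hgood i
  · intro j
    exact syt_row_count p (fun v => u (π1⁻¹ v)) (fun v => hu.1 (π1⁻¹ v))
      (fun a b hab => π1⁻¹.injective (hu.2.1 hab)) j
  · exact fun a b hab => π2⁻¹.injective (hw.2.1 hab)
  · exact fun v => hw.1 (π2⁻¹ v)

end Aux


/-- If `q, r` are standard Young tableaux of shapes `μ ⊢ k`, `λ ⊢ n` with `λ/μ` a horizontal
strip, `s, t` are standard Young tableaux of shapes `μ' ⊢ k`, `λ' ⊢ n` with `λ'/μ'` a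
horizontal strip, and `(μ, λ) ≠ (μ', λ')`, then `⟨f_{q,r}, f_{s,t}⟩ = 0` for the standard
inner product `⟨f, g⟩ = Σ_{σ ∈ S_{k,n}} f(σ)·conj(g(σ))` on `ℂ[S_{k,n}]`. -/
theorem stmt_8 (k n : ℕ) (hkn : k ≤ n)
    (mu mu' : Nat.Partition k) (lam lam' : Nat.Partition n)
    (hstrip : IsHorizStrip (partFun mu) (partFun lam))
    (hstrip' : IsHorizStrip (partFun mu') (partFun lam'))
    (q : Fin k → ℕ × ℕ) (r : Fin n → ℕ × ℕ) (s : Fin k → ℕ × ℕ) (t : Fin n → ℕ × ℕ)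
    (hq : IsSYTpos (partFun mu) q) (hr : IsSYTpos (partFun lam) r)
    (hs : IsSYTpos (partFun mu') s) (ht : IsSYTpos (partFun lam') t)
    (hne : (mu, lam) ≠ (mu', lam')) :
    ∑ σ : Fin k ↪ Fin n, fST q r σ * (starRingEnd ℂ) (fST s t σ) = 0 := by
  rw [Aux.lhs_eq]
  have hne2 : mu ≠ mu' ∨ lam ≠ lam' := by
    by_contra hc
    push_neg at hc
    exact hne (by rw [hc.1, hc.2])
  rcases hne2 with hmu | hlam
  · by_cases hd : ∀ i, (∑ j ∈ Finset.range i, partFun mu j) ≤ ∑ j ∈ Finset.range i, partFun mu' j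
    · have hd2 : ¬ ∀ i, (∑ j ∈ Finset.range i, partFun mu' j)
          ≤ ∑ j ∈ Finset.range i, partFun mu j := by
        intro hrev
        exact hmu (Aux.partition_eq_of_psum mu mu' hd hrev)
      rw [Aux.Tsum_comm]
      exact Aux.Tsum_zero_K s t q r
        (fun π1 π2 _ _ => Aux.pairEx_of_not_dom mu' mu s q hs hq hd2 π1 π2)
    · exact Aux.Tsum_zero_K q r s t
        (fun π1 π2 _ _ => Aux.pairEx_of_not_dom mu mu' q s hq hs hd π1 π2)
  · by_cases hd : ∀ i, (∑ j ∈ Finset.range i, partFun lam j)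
        ≤ ∑ j ∈ Finset.range i, partFun lam' j
    · have hd2 : ¬ ∀ i, (∑ j ∈ Finset.range i, partFun lam' j)
          ≤ ∑ j ∈ Finset.range i, partFun lam j := by
        intro hrev
        exact hlam (Aux.partition_eq_of_psum lam lam' hd hrev)
      rw [Aux.Tsum_comm]
      exact Aux.Tsum_zero_N s t q r
        (fun π1' π2' _ _ => Aux.pairEx_of_not_dom lam' lam t r ht hr hd2 π1' π2')
    · exact Aux.Tsum_zero_N q r s t
        (fun π1' π2' _ _ => Aux.pairEx_of_not_dom lam lam' r t hr ht hd π1' π2')
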